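/- Let G be a connected weighted graph on n ≥ 2 vertices with positive edge weights, let w_min and w_max be the minimum and maximum edge weights, and let α = w_max/w_min. Let ε ≥ 0 and let b, x ∈ ℝⁿ be vectors with bᵀ𝟙 = 0, xᵀ𝟙 = 0, and ‖b − L_G x‖_∞ ≤ ε · w_max · ‖x‖_∞. Then (b − L_G x)ᵀ L_G† (b − L_G x) ≤ 2 n⁶ α⁴ ε² · (xᵀ L_G x). -/

import Mathlib

open Matrix Finset

private lemma quad_form {n : ℕ} (w : Fin n → Fin n → ℝ) (hsymm : ∀ u v, w u v = w v u)
    (L : Matrix (Fin n) (Fin n) ℝ)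
    (hL : ∀ u v, L u v = if u = v then ∑ s ∈ univ.erase u, w u s else - w u v)
    (z : Fin n → ℝ) :
    z ⬝ᵥ L.mulVec z = (∑ u, ∑ v, w u v * (z u - z v) ^ 2) / 2 := by
  have h1 : z ⬝ᵥ L.mulVec z = ∑ u, ∑ v, w u v * (z u * (z u - z v)) := by
    simp only [dotProduct, Matrix.mulVec]
    refine Finset.sum_congr rfl fun u _ => ?_
    have hrow : ∑ v, L u v * z v = ∑ v ∈ univ.erase u, w u v * (z u - z v) := by
      rw [← Finset.add_sum_erase _ _ (Finset.mem_univ u)]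
      rw [hL u u, if_pos rfl, Finset.sum_mul, ← Finset.sum_add_distrib]
      refine Finset.sum_congr rfl fun v hv => ?_
      rw [hL u v, if_neg (Finset.ne_of_mem_erase hv).symm]
      ring
    rw [hrow, Finset.mul_sum]
    rw [← Finset.add_sum_erase _ (fun v => w u v * (z u * (z u - z v))) (Finset.mem_univ u)]
    simp only [sub_self, mul_zero, zero_add]
    exact Finset.sum_congr rfl fun v _ => by ring
  have h2 : ∑ u, ∑ v, w u v * (z u - z v) ^ 2
      = 2 * ∑ u, ∑ v, w u v * (z u * (z u - z v)) := by
    have key : ∀ u v, w u v * (z u - z v) ^ 2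
        = w u v * (z u * (z u - z v)) + w v u * (z v * (z v - z u)) := by
      intro u v; rw [hsymm v u]; ring
    simp_rw [key, Finset.sum_add_distrib]
    rw [Finset.sum_comm (f := fun u v => w v u * (z v * (z v - z u)))]
    ring
  rw [h1, h2]; ring

private lemma list_sq_sum_le (l : List ℝ) :
    l.sum ^ 2 ≤ l.length * (l.map (· ^ 2)).sum := by
  induction l with
  | nil => simp
  | cons a t ih =>
    have ht : (0:ℝ) ≤ (t.map (· ^ 2)).sum := by
      apply List.sum_nonneg; intro y hy
      simp only [List.mem_map] at hy; obtain ⟨z, _, rfl⟩ := hy; positivity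
    rcases List.eq_nil_or_concat t with rfl | hne
    · simp
    · have hm : (1:ℝ) ≤ (t.length : ℝ) := by
        obtain ⟨l', b, rfl⟩ := hne; simp
      simp only [List.sum_cons, List.map_cons, List.length_cons]
      push_cast
      nlinarith [sq_nonneg ((t.length : ℝ) * a - t.sum), ih, ht]

private lemma walk_telescope {n : ℕ} {G : SimpleGraph (Fin n)} {i j : Fin n} (z : Fin n → ℝ)
    (p : G.Walk i j) : (p.darts.map (fun d => z d.fst - z d.snd)).sum = z i - z j := by
  induction p with
  | nil => simp
  | cons h q ih => simp [SimpleGraph.Walk.darts_cons, ih]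

private lemma poincare {n : ℕ} (hn : 2 ≤ n) (w : Fin n → Fin n → ℝ)
    (hsymm : ∀ u v, w u v = w v u)
    (hnonneg : ∀ u v, 0 ≤ w u v)
    (hconn : (SimpleGraph.fromRel fun u v : Fin n => 0 < w u v).Connected)
    (wmin : ℝ)
    (hwmin : IsLeast {r : ℝ | ∃ u v : Fin n, u ≠ v ∧ 0 < w u v ∧ w u v = r} wmin)
    (L : Matrix (Fin n) (Fin n) ℝ)
    (hL : ∀ u v, L u v = if u = v then ∑ s ∈ univ.erase u, w u s else - w u v)
    (z : Fin n → ℝ) (hz : ∑ i, z i = 0) :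
    wmin * ‖z‖ ^ 2 ≤ 2 * n * (z ⬝ᵥ L.mulVec z) := by
  have hwminpos : 0 < wmin := by
    obtain ⟨u, v, _, hpos, heq⟩ := hwmin.1; exact heq ▸ hpos
  have hnpos : (0:ℝ) < n := by
    have : 0 < n := by omega
    exact_mod_cast this
  have hne : (univ : Finset (Fin n)).Nonempty := ⟨⟨0, by omega⟩, mem_univ _⟩
  obtain ⟨i, _, hi⟩ := Finset.exists_max_image univ z hne
  obtain ⟨j, _, hj⟩ := Finset.exists_min_image univ z hne
  have hzi : 0 ≤ z i := by
    have h1 : ∑ k, z k ≤ ∑ _k : Fin n, z i := Finset.sum_le_sum fun k _ => hi k (mem_univ k)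
    rw [hz, Finset.sum_const, card_univ, Fintype.card_fin, nsmul_eq_mul] at h1
    nlinarith
  have hzj : z j ≤ 0 := by
    have h1 : ∑ _k : Fin n, z j ≤ ∑ k, z k := Finset.sum_le_sum fun k _ => hj k (mem_univ k)
    rw [hz, Finset.sum_const, card_univ, Fintype.card_fin, nsmul_eq_mul] at h1
    nlinarith
  have hnd : ‖z‖ ≤ z i - z j := by
    refine (pi_norm_le_iff_of_nonneg (by linarith)).2 fun k => ?_
    rw [Real.norm_eq_abs, abs_le]
    exact ⟨by linarith [hj k (mem_univ k)], by linarith [hi k (mem_univ k)]⟩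
  obtain ⟨p0⟩ := hconn.preconnected i j
  set p := p0.bypass with hpdef
  have hp : p.IsPath := p0.bypass_isPath
  have hlen : (p.length : ℝ) ≤ n := by
    have h := hp.length_lt
    rw [Fintype.card_fin] at h
    exact_mod_cast h.le
  -- Cauchy–Schwarz along the path
  have htel := walk_telescope z p
  have hcs := list_sq_sum_le (p.darts.map fun d => z d.fst - z d.snd)
  rw [htel] at hcs
  simp only [List.length_map, SimpleGraph.Walk.length_darts, List.map_map] at hcs
  have hcs' : (z i - z j) ^ 2
      ≤ (p.length : ℝ) * (p.darts.map fun d => (z d.fst - z d.snd) ^ 2).sum := by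
    convert hcs using 3
    rfl
  set A := (p.darts.map fun d => (z d.fst - z d.snd) ^ 2).sum with hA
  set B := (p.darts.map fun d => w d.fst d.snd * (z d.fst - z d.snd) ^ 2).sum with hB
  set S := ∑ u, ∑ v, w u v * (z u - z v) ^ 2 with hS
  have hA0 : 0 ≤ A := by
    apply List.sum_nonneg; intro y hy
    simp only [List.mem_map] at hy; obtain ⟨d, _, rfl⟩ := hy; positivity
  have hstep : wmin * A ≤ B := by
    rw [hA, ← List.sum_map_mul_left]
    apply List.sum_le_sum
    intro d hd
    have hadj := d.adj
    rw [SimpleGraph.fromRel_adj] at hadj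
    have hpos : 0 < w d.fst d.snd := by
      rcases hadj.2 with h | h
      · exact h
      · rw [hsymm]; exact h
    have hle : wmin ≤ w d.fst d.snd := hwmin.2 ⟨d.fst, d.snd, hadj.1, hpos, rfl⟩
    nlinarith [sq_nonneg (z d.fst - z d.snd)]
  have hsub : B ≤ S := by
    have hnodup : (p.darts.map fun d => d.toProd).Nodup :=
      (SimpleGraph.Walk.darts_nodup_of_support_nodup hp.support_nodup).map
        SimpleGraph.Dart.toProd_injective
    have heq : B = ∑ q ∈ (p.darts.map fun d => d.toProd).toFinset,
        w q.1 q.2 * (z q.1 - z q.2) ^ 2 := by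
      rw [List.sum_toFinset _ hnodup, List.map_map]
      rfl
    rw [heq, hS]
    calc ∑ q ∈ (p.darts.map fun d => d.toProd).toFinset, w q.1 q.2 * (z q.1 - z q.2) ^ 2
        ≤ ∑ q : Fin n × Fin n, w q.1 q.2 * (z q.1 - z q.2) ^ 2 :=
          Finset.sum_le_sum_of_subset_of_nonneg (Finset.subset_univ _)
            (fun q _ _ => mul_nonneg (hnonneg _ _) (sq_nonneg _))
      _ = ∑ u, ∑ v, w u v * (z u - z v) ^ 2 := Fintype.sum_prod_type _
  have hquad := quad_form w hsymm L hL z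
  have h1 : wmin * ‖z‖ ^ 2 ≤ wmin * (z i - z j) ^ 2 :=
    mul_le_mul_of_nonneg_left (pow_le_pow_left₀ (norm_nonneg z) hnd 2) hwminpos.le
  have h2 : wmin * (z i - z j) ^ 2 ≤ wmin * ((n : ℝ) * A) :=
    mul_le_mul_of_nonneg_left (hcs'.trans (mul_le_mul_of_nonneg_right hlen hA0)) hwminpos.le
  have h3 : (n : ℝ) * (wmin * A) ≤ (n : ℝ) * B :=
    mul_le_mul_of_nonneg_left hstep hnpos.le
  have h4 : (n : ℝ) * B ≤ (n : ℝ) * S := mul_le_mul_of_nonneg_left hsub hnpos.le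
  rw [hquad]
  rw [← hS]
  nlinarith [h1, h2, h3, h4]

private lemma mulVec_dot {n : ℕ} (A : Matrix (Fin n) (Fin n) ℝ) (a c : Fin n → ℝ) :
    (A.mulVec a) ⬝ᵥ c = a ⬝ᵥ (Aᵀ.mulVec c) := by
  rw [dotProduct_comm, Matrix.dotProduct_mulVec, Matrix.mulVec_transpose, dotProduct_comm]

private lemma pinv_symm {n : ℕ} {L H : Matrix (Fin n) (Fin n) ℝ} (hLs : Lᵀ = L)
    (hH1 : L * H * L = L) (hH2 : H * L * H = H)
    (hH3 : (L * H)ᵀ = L * H) (hH4 : (H * L)ᵀ = H * L) : Hᵀ = H := by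
  have hY1 : L * Hᵀ * L = L := by
    have h := congrArg Matrix.transpose hH1
    rwa [Matrix.transpose_mul, Matrix.transpose_mul, hLs, ← Matrix.mul_assoc] at h
  have hY2 : Hᵀ * L * Hᵀ = Hᵀ := by
    have h := congrArg Matrix.transpose hH2
    rwa [Matrix.transpose_mul, Matrix.transpose_mul, hLs, ← Matrix.mul_assoc] at h
  have hAY : L * Hᵀ = H * L := by
    calc L * Hᵀ = Lᵀ * Hᵀ := by rw [hLs]
      _ = (H * L)ᵀ := (Matrix.transpose_mul H L).symm
      _ = H * L := hH4
  have hYA : Hᵀ * L = L * H := by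
    calc Hᵀ * L = Hᵀ * Lᵀ := by rw [hLs]
      _ = (L * H)ᵀ := (Matrix.transpose_mul L H).symm
      _ = L * H := hH3
  have hcomm : H * L = L * H := by
    have e1 : H * L = (L * H) * (H * L) := by
      calc H * L = L * Hᵀ := hAY.symm
        _ = (L * H * L) * Hᵀ := by rw [hH1]
        _ = (L * H) * (L * Hᵀ) := by rw [Matrix.mul_assoc]
        _ = (L * H) * (H * L) := by rw [hAY]
    have e2 : (L * H) * (H * L) = ((H * L) * (L * H))ᵀ := by
      rw [Matrix.transpose_mul, hH3, hH4]
    have e3 : (H * L) * (L * H) = L * H := by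
      calc (H * L) * (L * H) = (L * Hᵀ) * (L * H) := by rw [hAY]
        _ = (L * Hᵀ * L) * H := by rw [← Matrix.mul_assoc]
        _ = L * H := by rw [hY1]
    rw [e1, e2, e3, hH3]
  calc Hᵀ = Hᵀ * L * Hᵀ := hY2.symm
    _ = (L * H) * Hᵀ := by rw [hYA]
    _ = (H * L) * Hᵀ := by rw [hcomm]
    _ = H * (L * Hᵀ) := by rw [Matrix.mul_assoc]
    _ = H * (H * L) := by rw [hAY]
    _ = H * (L * H) := by rw [hcomm]
    _ = H := by rw [← Matrix.mul_assoc, hH2]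

theorem stmt_1 (n : ℕ) (hn : 2 ≤ n)
    (w : Fin n → Fin n → ℝ)
    (hsymm : ∀ u v, w u v = w v u)
    (hnonneg : ∀ u v, 0 ≤ w u v)
    (hconn : (SimpleGraph.fromRel fun u v : Fin n => 0 < w u v).Connected)
    (wmin wmax : ℝ)
    (hwmin : IsLeast {r : ℝ | ∃ u v : Fin n, u ≠ v ∧ 0 < w u v ∧ w u v = r} wmin)
    (hwmax : IsGreatest {r : ℝ | ∃ u v : Fin n, u ≠ v ∧ 0 < w u v ∧ w u v = r} wmax)
    (α : ℝ) (hα : α = wmax / wmin)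
    (L : Matrix (Fin n) (Fin n) ℝ)
    (hL : ∀ u v, L u v = if u = v then ∑ s ∈ univ.erase u, w u s else - w u v)
    (H : Matrix (Fin n) (Fin n) ℝ)
    (hH1 : L * H * L = L) (hH2 : H * L * H = H)
    (hH3 : (L * H)ᵀ = L * H) (hH4 : (H * L)ᵀ = H * L)
    (ε : ℝ) (hε : 0 ≤ ε) (b x : Fin n → ℝ)
    (hb : ∑ i, b i = 0) (hx : ∑ i, x i = 0)
    (hclose : ‖b - L.mulVec x‖ ≤ ε * wmax * ‖x‖) :
    (b - L.mulVec x) ⬝ᵥ H.mulVec (b - L.mulVec x)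
      ≤ 2 * (n : ℝ) ^ 6 * α ^ 4 * ε ^ 2 * (x ⬝ᵥ L.mulVec x) := by
  have hW : 0 < wmin := by obtain ⟨u, v, _, hpos, heq⟩ := hwmin.1; exact heq ▸ hpos
  have hWM : wmin ≤ wmax := hwmax.2 hwmin.1
  have hnpos : (0:ℝ) < n := by exact_mod_cast (by omega : 0 < n)
  have hn2 : (2:ℝ) ≤ n := by exact_mod_cast hn
  -- symmetry of L
  have hsymL : ∀ a c, L a c = L c a := by
    intro a c
    rw [hL, hL]
    by_cases h : a = c
    · subst h; rfl
    · rw [if_neg h, if_neg (Ne.symm h), hsymm]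
  have hLs : Lᵀ = L := by ext a c; rw [Matrix.transpose_apply, hsymL]
  have hHs : Hᵀ = H := pinv_symm hLs hH1 hH2 hH3 hH4
  -- row sums of L vanish
  have hrowsum : ∀ u, ∑ v, L u v = 0 := by
    intro u
    rw [← Finset.add_sum_erase _ _ (Finset.mem_univ u), hL u u, if_pos rfl]
    have hh : ∑ v ∈ univ.erase u, L u v = ∑ v ∈ univ.erase u, -(w u v) := by
      refine Finset.sum_congr rfl fun v hv => ?_
      rw [hL u v, if_neg (Finset.ne_of_mem_erase hv).symm]
    rw [hh, Finset.sum_neg_distrib]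
    ring
  have hmulsum : ∀ y : Fin n → ℝ, ∑ i, L.mulVec y i = 0 := by
    intro y
    simp only [Matrix.mulVec, dotProduct]
    rw [Finset.sum_comm]
    have : ∀ v, ∑ i, L i v * y v = 0 := by
      intro v
      rw [← Finset.sum_mul]
      rw [Finset.sum_congr rfl fun i _ => hsymL i v]
      rw [hrowsum v, zero_mul]
    simp [this]
  have quad_nonneg : ∀ v : Fin n → ℝ, 0 ≤ v ⬝ᵥ L.mulVec v := by
    intro v
    rw [quad_form w hsymm L hL v]
    apply div_nonneg _ (by norm_num)
    exact Finset.sum_nonneg fun u _ => Finset.sum_nonneg fun s _ =>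
      mul_nonneg (hnonneg _ _) (sq_nonneg _)
  set r : Fin n → ℝ := b - L.mulVec x with hrdef
  have hrsum : ∑ i, r i = 0 := by
    simp only [hrdef, Pi.sub_apply, Finset.sum_sub_distrib, hb, hmulsum x, sub_zero]
  set y : Fin n → ℝ := H.mulVec r with hydef
  set m : ℝ := (∑ i, y i) / n with hmdef
  set yb : Fin n → ℝ := fun i => y i - m with hybdef
  have hybsum : ∑ i, yb i = 0 := by
    simp only [hybdef, Finset.sum_sub_distrib, Finset.sum_const, card_univ,
      Fintype.card_fin, nsmul_eq_mul, hmdef]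
    field_simp
    ring
  have hLyb : L.mulVec yb = L.mulVec y := by
    funext u
    simp only [Matrix.mulVec, dotProduct, hybdef, mul_sub, Finset.sum_sub_distrib]
    rw [← Finset.sum_mul, hrowsum u, zero_mul, sub_zero]
  set Q : ℝ := r ⬝ᵥ H.mulVec r with hQdef
  -- Q = y ⬝ᵥ L y
  have hQy : y ⬝ᵥ L.mulVec y = Q := by
    calc y ⬝ᵥ L.mulVec y = (H.mulVec r) ⬝ᵥ ((L * H).mulVec r) := by
          rw [hydef, Matrix.mulVec_mulVec]
      _ = r ⬝ᵥ (Hᵀ.mulVec ((L * H).mulVec r)) := mulVec_dot H r _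
      _ = r ⬝ᵥ ((Hᵀ * (L * H)).mulVec r) := by rw [Matrix.mulVec_mulVec]
      _ = r ⬝ᵥ (H.mulVec r) := by rw [hHs, ← Matrix.mul_assoc, hH2]
      _ = Q := rfl
  have hQyb : yb ⬝ᵥ L.mulVec yb = Q := by
    rw [hLyb, ← hQy]
    simp only [dotProduct, hybdef, sub_mul, Finset.sum_sub_distrib]
    rw [← Finset.mul_sum, hmulsum y, mul_zero, sub_zero]
  have hQ0 : 0 ≤ Q := hQyb ▸ quad_nonneg yb
  have hQx0 : 0 ≤ x ⬝ᵥ L.mulVec x := quad_nonneg x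
  -- Q = r ⬝ᵥ yb
  have hQr : r ⬝ᵥ yb = Q := by
    simp only [dotProduct, hybdef, mul_sub, Finset.sum_sub_distrib]
    rw [← Finset.sum_mul, hrsum, zero_mul, sub_zero, hQdef, ← hydef]
    rfl
  try clear_value Q
  try clear_value yb
  try clear_value m
  try clear_value y
  try clear_value r
  try clear_value Q
  try clear_value yb
  try clear_value m
  try clear_value y
  try clear_value r
  -- Cauchy–Schwarz
  have hCS : Q ^ 2 ≤ (r ⬝ᵥ r) * (yb ⬝ᵥ yb) := by
    rw [← hQr]
    have := Finset.sum_mul_sq_le_sq_mul_sq univ r yb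
    simpa only [dotProduct, pow_two] using
      (by simpa [pow_two] using this :
        (∑ i, r i * yb i) ^ 2 ≤ (∑ i, r i * r i) * ∑ i, yb i * yb i)
  -- ℓ2 vs ℓ∞
  have hl2 : ∀ v : Fin n → ℝ, v ⬝ᵥ v ≤ n * ‖v‖ ^ 2 := by
    intro v
    have h1 : ∀ i, v i * v i ≤ ‖v‖ ^ 2 := by
      intro i
      have h2 := norm_le_pi_norm v i
      have h3 : |v i| ≤ ‖v‖ := by rwa [Real.norm_eq_abs] at h2
      nlinarith [abs_nonneg (v i), le_abs_self (v i), neg_abs_le (v i)]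
    calc v ⬝ᵥ v = ∑ i, v i * v i := rfl
      _ ≤ ∑ _i : Fin n, ‖v‖ ^ 2 := Finset.sum_le_sum fun i _ => h1 i
      _ = n * ‖v‖ ^ 2 := by
          rw [Finset.sum_const, card_univ, Fintype.card_fin, nsmul_eq_mul]
  -- Poincaré bounds
  have hPx : wmin * ‖x‖ ^ 2 ≤ 2 * n * (x ⬝ᵥ L.mulVec x) :=
    poincare hn w hsymm hnonneg hconn wmin hwmin L hL x hx
  have hPyb : wmin * ‖yb‖ ^ 2 ≤ 2 * n * Q := by
    have := poincare hn w hsymm hnonneg hconn wmin hwmin L hL yb hybsum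
    rwa [hQyb] at this
  have hR0 : 0 ≤ r ⬝ᵥ r := by
    exact Finset.sum_nonneg fun i _ => mul_self_nonneg (r i)
  -- wmin * (yb ⬝ᵥ yb) ≤ 2 n² Q
  have hYd : wmin * (yb ⬝ᵥ yb) ≤ 2 * (n:ℝ) ^ 2 * Q := by
    have h1 : wmin * (yb ⬝ᵥ yb) ≤ wmin * ((n:ℝ) * ‖yb‖ ^ 2) :=
      mul_le_mul_of_nonneg_left (hl2 yb) hW.le
    have h2 : (n:ℝ) * (wmin * ‖yb‖ ^ 2) ≤ (n:ℝ) * (2 * n * Q) :=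
      mul_le_mul_of_nonneg_left hPyb hnpos.le
    linarith [h1, h2]
  -- r ⬝ᵥ r ≤ n ε² wmax² ‖x‖²
  have hrr : r ⬝ᵥ r ≤ (n:ℝ) * ε ^ 2 * wmax ^ 2 * ‖x‖ ^ 2 := by
    have h1 : ‖r‖ ^ 2 ≤ (ε * wmax * ‖x‖) ^ 2 := by
      apply pow_le_pow_left₀ (norm_nonneg r) _ 2
      exact hclose
    have h2 := hl2 r
    have h3 : (n:ℝ) * ‖r‖ ^ 2 ≤ (n:ℝ) * (ε * wmax * ‖x‖) ^ 2 :=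
      mul_le_mul_of_nonneg_left h1 hnpos.le
    have h4 : (n:ℝ) * (ε * wmax * ‖x‖) ^ 2 = (n:ℝ) * ε ^ 2 * wmax ^ 2 * ‖x‖ ^ 2 := by ring
    linarith [h2, h3]
  -- combine
  rcases eq_or_lt_of_le hQ0 with hQz | hQpos
  · rw [← hQz]
    have : (0:ℝ) ≤ 2 * (n:ℝ) ^ 6 * α ^ 4 * ε ^ 2 :=
      mul_nonneg (mul_nonneg (mul_nonneg (by norm_num) (by positivity))
        (by positivity)) (sq_nonneg ε)
    exact mul_nonneg this hQx0
  · have c1 : wmin ^ 2 * (Q * Q) ≤ wmin ^ 2 * ((r ⬝ᵥ r) * (yb ⬝ᵥ yb)) := by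
      have := mul_le_mul_of_nonneg_left hCS (by positivity : (0:ℝ) ≤ wmin ^ 2)
      linarith [this]
    have c2 : (wmin * (r ⬝ᵥ r)) * (wmin * (yb ⬝ᵥ yb))
        ≤ (wmin * (r ⬝ᵥ r)) * (2 * (n:ℝ) ^ 2 * Q) :=
      mul_le_mul_of_nonneg_left hYd (mul_nonneg hW.le hR0)
    have d0 : wmin ^ 2 * (Q * Q) ≤ 2 * (n:ℝ) ^ 2 * wmin * (r ⬝ᵥ r) * Q := by
      linarith [c1, c2]
    have d1 : wmin ^ 2 * Q ≤ 2 * (n:ℝ) ^ 2 * wmin * (r ⬝ᵥ r) := by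
      have := le_of_mul_le_mul_right (by linarith [d0] :
        (wmin ^ 2 * Q) * Q ≤ (2 * (n:ℝ) ^ 2 * wmin * (r ⬝ᵥ r)) * Q) hQpos
      exact this
    have d2 : 2 * (n:ℝ) ^ 2 * wmin * (r ⬝ᵥ r)
        ≤ 2 * (n:ℝ) ^ 2 * wmin * ((n:ℝ) * ε ^ 2 * wmax ^ 2 * ‖x‖ ^ 2) :=
      mul_le_mul_of_nonneg_left hrr (by positivity)
    have d4 : 2 * (n:ℝ) ^ 3 * ε ^ 2 * wmax ^ 2 * (wmin * ‖x‖ ^ 2)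
        ≤ 2 * (n:ℝ) ^ 3 * ε ^ 2 * wmax ^ 2 * (2 * n * (x ⬝ᵥ L.mulVec x)) :=
      mul_le_mul_of_nonneg_left hPx (by positivity)
    have d5 : wmin ^ 2 * Q ≤ 4 * (n:ℝ) ^ 4 * ε ^ 2 * wmax ^ 2 * (x ⬝ᵥ L.mulVec x) := by
      linarith [d1, d2, d4]
    have e3 : 2 * wmin ^ 2 ≤ (n:ℝ) ^ 2 * wmax ^ 2 := by
      have hM2 : wmin ^ 2 ≤ wmax ^ 2 := pow_le_pow_left₀ hW.le hWM 2
      have hN4 : (4:ℝ) ≤ (n:ℝ) ^ 2 := by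
        calc (4:ℝ) = 2 * 2 := by norm_num
          _ ≤ (n:ℝ) * (n:ℝ) := mul_le_mul hn2 hn2 (by norm_num) (by linarith)
          _ = (n:ℝ) ^ 2 := (sq (n:ℝ)).symm
      have hprod : 0 ≤ ((n:ℝ) ^ 2 - 4) * wmax ^ 2 :=
        mul_nonneg (by linarith) (sq_nonneg wmax)
      linarith [hM2, hprod, sq_nonneg wmin]
    have e2 : 0 ≤ ε ^ 2 * (x ⬝ᵥ L.mulVec x) := mul_nonneg (sq_nonneg ε) hQx0
    have e1 : wmin ^ 2 * (wmin ^ 2 * Q)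
        ≤ wmin ^ 2 * (4 * (n:ℝ) ^ 4 * ε ^ 2 * wmax ^ 2 * (x ⬝ᵥ L.mulVec x)) :=
      mul_le_mul_of_nonneg_left d5 (by positivity)
    have e4 : 4 * (n:ℝ) ^ 4 * ε ^ 2 * wmax ^ 2 * (x ⬝ᵥ L.mulVec x) * wmin ^ 2
        ≤ 2 * (n:ℝ) ^ 6 * wmax ^ 4 * ε ^ 2 * (x ⬝ᵥ L.mulVec x) := by
      have hint := mul_nonneg (mul_nonneg
        (by positivity : (0:ℝ) ≤ 2 * (n:ℝ) ^ 4 * wmax ^ 2) e2) (sub_nonneg.2 e3)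
      linarith [hint]
    have hfin : Q * wmin ^ 4 ≤ 2 * (n:ℝ) ^ 6 * wmax ^ 4 * ε ^ 2 * (x ⬝ᵥ L.mulVec x) := by
      linarith [e1, e4]
    have hrw : 2 * (n:ℝ) ^ 6 * α ^ 4 * ε ^ 2 * (x ⬝ᵥ L.mulVec x)
        = 2 * (n:ℝ) ^ 6 * wmax ^ 4 * ε ^ 2 * (x ⬝ᵥ L.mulVec x) / wmin ^ 4 := by
      rw [hα]; field_simp
    rw [hrw, le_div_iff₀ (by positivity : (0:ℝ) < wmin ^ 4)]
    exact hfin
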